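/- Assume V is nonempty and let δ = (β/α) · max_{l ∈ V} Σ_{j ∈ V} s(l,j). Define the offset objective f_δ(S) = α · Σ_{v ∈ S} (u(v) + δ) − (β/2) · Σ_{v ∈ S} Σ_{w ∈ S} s(v,w), where additionally u(v) ≥ 0 for all v ∈ V. Then f_δ is monotone non-decreasing: for all B ⊆ A ⊆ V, f_δ(B) ≤ f_δ(A). -/

import Mathlib

open Finset

/-- Adding the offset `δ = (β/α) · max_l Σ_j s l j` to all (nonnegative) utilities makes the
pairwise objective monotone non-decreasing. -/
theorem offset_objective_monotone {V : Type*} [Fintype V] [DecidableEq V] [Nonempty V]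
    (α β : ℝ) (hα : 0 < α) (hβ : 0 ≤ β)
    (u : V → ℝ) (s : V → V → ℝ)
    (hsymm : ∀ v w, s v w = s w v) (hnn : ∀ v w, 0 ≤ s v w)
    (hdiag : ∀ v, s v v = 0)
    (hu : ∀ v, 0 ≤ u v)
    (δ : ℝ)
    (hδ : δ = (β / α) * (Finset.univ.sup' Finset.univ_nonempty fun l : V => ∑ j, s l j))
    (fδ : Finset V → ℝ)
    (hfδ : ∀ S : Finset V,
      fδ S = α * ∑ v ∈ S, (u v + δ) - (β / 2) * ∑ v ∈ S, ∑ w ∈ S, s v w) :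
    ∀ A B : Finset V, B ⊆ A → fδ B ≤ fδ A := by
  have hαδ : ∀ v : V, β * ∑ j, s v j ≤ α * δ := by
    intro v
    have h1 : (∑ j, s v j) ≤ Finset.univ.sup' Finset.univ_nonempty fun l : V => ∑ j, s l j :=
      Finset.le_sup' (f := fun l : V => ∑ j, s l j) (Finset.mem_univ v)
    have : α * δ = β * (Finset.univ.sup' Finset.univ_nonempty fun l : V => ∑ j, s l j) := by
      rw [hδ]; field_simp
    rw [this]
    exact mul_le_mul_of_nonneg_left h1 hβ
  have step : ∀ (v : V) (S : Finset V), v ∉ S → fδ S ≤ fδ (insert v S) := by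
    intro v S hv
    rw [hfδ, hfδ, Finset.sum_insert hv]
    have hdouble : ∑ x ∈ insert v S, ∑ w ∈ insert v S, s x w
        = 2 * (∑ w ∈ S, s v w) + ∑ x ∈ S, ∑ w ∈ S, s x w := by
      rw [Finset.sum_insert hv, Finset.sum_insert hv, hdiag]
      have : ∀ x ∈ S, ∑ w ∈ insert v S, s x w = s x v + ∑ w ∈ S, s x w := by
        intro x _; rw [Finset.sum_insert hv]
      rw [Finset.sum_congr rfl this, Finset.sum_add_distrib]
      have : ∑ x ∈ S, s x v = ∑ x ∈ S, s v x := by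
        exact Finset.sum_congr rfl fun x _ => hsymm x v
      rw [this]; ring
    rw [hdouble]
    have h1 : β * ∑ w ∈ S, s v w ≤ α * δ := by
      refine le_trans (mul_le_mul_of_nonneg_left ?_ hβ) (hαδ v)
      exact Finset.sum_le_sum_of_subset_of_nonneg (Finset.subset_univ S)
        (fun j _ _ => hnn v j)
    nlinarith [mul_nonneg hα.le (hu v)]
  intro A B hBA
  have key : ∀ (C B : Finset V), Disjoint B C → fδ B ≤ fδ (B ∪ C) := by
    intro C
    induction C using Finset.induction_on with
    | empty => intro B _; simp
    | insert a C hv ih =>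
      intro B hdisj
      have hdisj' : Disjoint B C := hdisj.mono_right (Finset.subset_insert a C)
      have haB : a ∉ B ∪ C := by
        simp only [Finset.mem_union, not_or]
        exact ⟨Finset.disjoint_right.mp hdisj (Finset.mem_insert_self a C), hv⟩
      calc fδ B ≤ fδ (B ∪ C) := ih B hdisj'
        _ ≤ fδ (insert a (B ∪ C)) := step a _ haB
        _ = fδ (B ∪ insert a C) := by rw [Finset.union_insert]
  have := key (A \ B) B (Finset.disjoint_sdiff)
  rwa [Finset.union_sdiff_of_subset hBA] at this
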